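/- For every ρ > 0 and every ε ∈ (0,2) there exist constants C > 0 and t₀ > 0 such that for all t ≥ t₀: ∫ over r ∈ (0, t^{2−ε}) ∪ (t^{2+ε}, ∞) of t (1+r) (t² + r²)^{−5/4} exp( −ρ( √(t² + r²) − r ) ) dr ≤ C t^{−ε/2}. -/

import Mathlib

open MeasureTheory Metric Real Filter

open Set Topology

set_option maxHeartbeats 1000000

lemma ev_aux (ρ m : ℝ) (hρ : 0 < ρ) (hm : 0 < m) (q : ℝ) :
    ∀ᶠ t : ℝ in atTop, 2 * (t ^ q * Real.exp (-(ρ/3) * t ^ m)) ≤ 1 := by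
  have h1 := tendsto_rpow_mul_exp_neg_mul_atTop_nhds_zero (q/m) (ρ/3) (by positivity)
  have h2 := tendsto_rpow_atTop hm
  have h3 : Tendsto (fun t : ℝ => t ^ q * Real.exp (-(ρ/3) * t ^ m)) atTop (𝓝 0) := by
    apply (h1.comp h2).congr'
    filter_upwards [eventually_gt_atTop (0:ℝ)] with t ht
    simp only [Function.comp]
    rw [← Real.rpow_mul ht.le, mul_comm m (q/m), div_mul_cancel₀ q hm.ne']
  have h4 : Tendsto (fun t : ℝ => 2 * (t ^ q * Real.exp (-(ρ/3) * t ^ m))) atTop (𝓝 0) := by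
    simpa using h3.const_mul (2:ℝ)
  exact h4.eventually_le_const one_pos

/-- the radial integral estimate behind the determination of the critical region
of the Poisson kernel on a rank one non-compact symmetric space: the integral of
`t (1+r)(t²+r²)^{-5/4} e^{-ρ(√(t²+r²)-r)}` over `(0, t^{2-ε}) ∪ (t^{2+ε}, ∞)`
is `O(t^{-ε/2})`. -/
theorem stmt_15 :
    ∀ ρ : ℝ, 0 < ρ → ∀ ε : ℝ, 0 < ε → ε < 2 →
      ∃ C t₀ : ℝ, 0 < C ∧ 0 < t₀ ∧ ∀ t : ℝ, t₀ ≤ t →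
        (∫ r in Set.Ioo (0:ℝ) (t ^ (2-ε)) ∪ Set.Ioi (t ^ (2+ε)),
            t * (1+r) * (t^2 + r^2) ^ (-(5/4 : ℝ)) *
              Real.exp (-ρ * (Real.sqrt (t^2 + r^2) - r)))
          ≤ C * t ^ (-(ε/2)) := by
  intro ρ hρ ε hε hε2
  set m := min ε 1 with hm_def
  have hm : 0 < m := lt_min hε one_pos
  have hm1 : m ≤ 1 := min_le_right _ _
  have hmε : m ≤ ε := min_le_left _ _
  obtain ⟨t₁, ht₁⟩ := (ev_aux ρ m hρ hm (5/2 - 3*ε/2)).exists_forall_of_atTop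
  refine ⟨5, max t₁ 2, by norm_num, lt_of_lt_of_le two_pos (le_max_right _ _), ?_⟩
  intro t ht
  have ht1 : (1:ℝ) ≤ t := le_trans (by norm_num) (le_trans (le_max_right t₁ 2) ht)
  have ht0 : (0:ℝ) < t := lt_of_lt_of_le one_pos ht1
  have hkey := ht₁ t (le_trans (le_max_left _ _) ht)
  set a := t ^ ((2-ε):ℝ) with ha_def
  set b := t ^ ((2+ε):ℝ) with hb_def
  have ha1 : (1:ℝ) ≤ a := Real.one_le_rpow ht1 (by linarith)
  have ha0 : (0:ℝ) < a := lt_of_lt_of_le one_pos ha1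
  have hab : a ≤ b := Real.rpow_le_rpow_of_exponent_le ht1 (by linarith)
  have hb1 : (1:ℝ) ≤ b := le_trans ha1 hab
  have hb0 : (0:ℝ) < b := lt_of_lt_of_le one_pos hb1
  set F : ℝ → ℝ := fun r => t * (1+r) * (t^2 + r^2) ^ (-(5/4 : ℝ)) *
      Real.exp (-ρ * (Real.sqrt (t^2 + r^2) - r)) with hF_def
  have hcont : Continuous F := by
    apply Continuous.mul
    · apply Continuous.mul (by continuity)
      apply Continuous.rpow_const (by continuity)
      intro r; left; positivity
    · exact Real.continuous_exp.comp (by continuity)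
  -- integrability on Ioo
  have hFioo : IntegrableOn F (Ioo 0 a) :=
    (hcont.integrableOn_Icc (a := 0) (b := a)).mono_set Ioo_subset_Icc_self
  -- pointwise bound on Ioi b
  have hbound : ∀ r ∈ Ioi b, F r ≤ 2*t * r ^ (-(3/2):ℝ) := by
    intro r hr
    have hr1 : 1 ≤ r := hb1.trans (le_of_lt hr)
    have hr0 : 0 < r := lt_of_lt_of_le one_pos hr1
    have e1 : t * (1+r) ≤ t * (2*r) := by nlinarith
    have e2 : (t^2 + r^2) ^ (-(5/4):ℝ) ≤ (r^2) ^ (-(5/4):ℝ) :=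
      Real.rpow_le_rpow_of_nonpos (by positivity) (by nlinarith) (by norm_num)
    have e3 : Real.exp (-ρ * (Real.sqrt (t^2+r^2) - r)) ≤ 1 := by
      rw [Real.exp_le_one_iff]
      have hrs : r ≤ Real.sqrt (t^2 + r^2) := by
        nth_rewrite 1 [show r = Real.sqrt (r^2) from (Real.sqrt_sq hr0.le).symm]
        exact Real.sqrt_le_sqrt (by nlinarith)
      nlinarith
    have e4 : (r^2:ℝ) ^ (-(5/4):ℝ) = r ^ (-(5/2):ℝ) := by
      rw [← Real.rpow_natCast r 2, ← Real.rpow_mul hr0.le]; norm_num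
    have e5 : r * r ^ (-(5/2):ℝ) = r ^ (-(3/2):ℝ) := by
      rw [show (-(3/2):ℝ) = 1 + -(5/2) by norm_num, Real.rpow_add hr0, Real.rpow_one]
    calc F r ≤ t * (2*r) * (r^2)^(-(5/4):ℝ) * 1 := by
          apply mul_le_mul (mul_le_mul e1 e2 (by positivity) (by positivity)) e3
            (Real.exp_pos _).le (by positivity)
      _ = 2*t * r^(-(3/2):ℝ) := by rw [e4, mul_one, ← e5]; ring
  have hgInt : IntegrableOn (fun r : ℝ => 2*t * r ^ (-(3/2):ℝ)) (Ioi b) :=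
    (integrableOn_Ioi_rpow_of_lt (by norm_num) hb0).const_mul (2*t)
  have hFIoi : IntegrableOn F (Ioi b) := by
    apply Integrable.mono' hgInt hcont.aestronglyMeasurable.restrict
    filter_upwards [ae_restrict_mem measurableSet_Ioi] with r hr
    have hr0 : (0:ℝ) < r := lt_trans hb0 hr
    rw [Real.norm_eq_abs, abs_of_nonneg (by positivity)]
    exact hbound r hr
  -- constant bound on Ioo
  set E := Real.exp (-(ρ/3) * t^m) with hE_def
  set K := t * (2*a) * t^(-(5/2):ℝ) * E with hK_def
  have hKbound : ∀ r ∈ Ioo (0:ℝ) a, F r ≤ K := by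
    intro r hr
    obtain ⟨hr0, hra⟩ := hr
    have e1 : t * (1+r) ≤ t * (2*a) := by nlinarith
    have e2 : (t^2 + r^2) ^ (-(5/4):ℝ) ≤ t ^ (-(5/2):ℝ) := by
      have : ((t^2:ℝ)) ^ (-(5/4):ℝ) = t ^ (-(5/2):ℝ) := by
        rw [← Real.rpow_natCast t 2, ← Real.rpow_mul ht0.le]; norm_num
      rw [← this]
      exact Real.rpow_le_rpow_of_nonpos (by positivity) (by nlinarith) (by norm_num)
    have e3 : Real.exp (-ρ * (Real.sqrt (t^2+r^2) - r)) ≤ E := by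
      rw [hE_def, Real.exp_le_exp]
      set s := Real.sqrt (t^2 + r^2) with hs_def
      have hs2 : s^2 = t^2 + r^2 := Real.sq_sqrt (by positivity)
      have hs_nn : 0 ≤ s := Real.sqrt_nonneg _
      have hs_le : s ≤ t + r := by
        rw [hs_def, show t + r = Real.sqrt ((t+r)^2) from (Real.sqrt_sq (by positivity)).symm]
        exact Real.sqrt_le_sqrt (by nlinarith)
      have htm : t ≤ t ^ ((2-m):ℝ) := by
        nth_rewrite 1 [← Real.rpow_one t]
        exact Real.rpow_le_rpow_of_exponent_le ht1 (by linarith)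
      have ham : a ≤ t ^ ((2-m):ℝ) :=
        Real.rpow_le_rpow_of_exponent_le ht1 (by linarith)
      have hsum_le : s + r ≤ 3 * t ^ ((2-m):ℝ) := by linarith
      have hsr_pos : 0 < s + r := by linarith
      have hprod : (s - r) * (s + r) = t^2 := by nlinarith
      have hpow : t^m * t^((2-m):ℝ) = t^2 := by
        rw [← Real.rpow_add ht0, ← Real.rpow_natCast t 2]; norm_num
      have hmain : t^m/3 ≤ s - r := by
        have h5 : (t^m/3) * (s+r) ≤ (s-r)*(s+r) := by
          rw [hprod]
          calc (t^m/3)*(s+r) ≤ (t^m/3)*(3*t^((2-m):ℝ)) := by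
                apply mul_le_mul_of_nonneg_left hsum_le (by positivity)
            _ = t^m * t^((2-m):ℝ) := by ring
            _ = t^2 := hpow
        exact le_of_mul_le_mul_right h5 hsr_pos
      nlinarith [Real.rpow_pos_of_pos ht0 m]
    calc F r ≤ t * (2*a) * t^(-(5/2):ℝ) * E := by
          apply mul_le_mul (mul_le_mul e1 e2 (by positivity) (by positivity)) e3
            (Real.exp_pos _).le (by positivity)
      _ = K := rfl
  have hE_pos : 0 < E := Real.exp_pos _
  have hK_nn : 0 ≤ K := by positivity
  have hIoo_le : (∫ r in Ioo (0:ℝ) a, F r) ≤ K * a := by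
    calc (∫ r in Ioo (0:ℝ) a, F r) ≤ ∫ _ in Ioo (0:ℝ) a, K :=
        setIntegral_mono_on hFioo (integrableOn_const measure_Ioo_lt_top.ne)
          measurableSet_Ioo hKbound
      _ = (volume (Ioo (0:ℝ) a)).toReal * K := by rw [setIntegral_const, smul_eq_mul]; rfl
      _ = a * K := by rw [Real.volume_Ioo, ENNReal.toReal_ofReal (by linarith)]; ring_nf
      _ = K * a := mul_comm _ _
  have hIoi_le : (∫ r in Ioi b, F r) ≤ 4 * t * b ^ (-(1/2):ℝ) := by
    calc (∫ r in Ioi b, F r) ≤ ∫ r in Ioi b, 2*t * r^(-(3/2):ℝ) :=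
        setIntegral_mono_on hFIoi hgInt measurableSet_Ioi hbound
      _ = 2*t * ∫ r in Ioi b, r^(-(3/2):ℝ) := by rw [integral_const_mul]
      _ = 2*t * (-b^((-(3/2):ℝ)+1)/((-(3/2):ℝ)+1)) := by
          rw [integral_Ioi_rpow_of_lt (by norm_num) hb0]
      _ = 4 * t * b ^ (-(1/2):ℝ) := by norm_num; ring
  -- value of the Ioi bound
  have hIoi_val : 4 * t * b ^ (-(1/2):ℝ) = 4 * t ^ (-(ε/2):ℝ) := by
    rw [hb_def, ← Real.rpow_mul ht0.le]
    nth_rewrite 1 [← Real.rpow_one t]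
    rw [mul_assoc, ← Real.rpow_add ht0]
    congr 1; ring
  -- value of the Ioo bound
  have hKa : K * a ≤ t ^ (-(ε/2):ℝ) := by
    have hKa_eq : K * a = 2 * (t ^ ((5/2 - 3*ε/2):ℝ) * E) * t ^ (-(ε/2):ℝ) := by
      rw [hK_def, ha_def]
      nth_rewrite 1 [← Real.rpow_one t]
      rw [show t^(1:ℝ) * (2 * t^((2-ε):ℝ)) * t^(-(5/2):ℝ) * E * t^((2-ε):ℝ)
          = 2 * (t^(1:ℝ) * t^((2-ε):ℝ) * t^(-(5/2):ℝ) * t^((2-ε):ℝ)) * E by ring]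
      rw [← Real.rpow_add ht0, ← Real.rpow_add ht0, ← Real.rpow_add ht0]
      rw [show ((1:ℝ) + (2-ε) + -(5/2) + (2-ε)) = (5/2 - 3*ε/2) + -(ε/2) by ring]
      rw [Real.rpow_add ht0]
      ring
    rw [hKa_eq]
    calc 2 * (t ^ ((5/2 - 3*ε/2):ℝ) * E) * t ^ (-(ε/2):ℝ)
        ≤ 1 * t ^ (-(ε/2):ℝ) := by
          apply mul_le_mul_of_nonneg_right hkey (Real.rpow_pos_of_pos ht0 _).le
      _ = t ^ (-(ε/2):ℝ) := one_mul _
  -- putting things together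
  have hdisj : Disjoint (Ioo (0:ℝ) a) (Ioi b) := by
    rw [Set.disjoint_left]
    rintro x ⟨_, hx2⟩ hx3
    simp only [mem_Ioi] at hx3
    linarith
  rw [show (∫ r in Set.Ioo (0:ℝ) (t ^ (2-ε)) ∪ Set.Ioi (t ^ (2+ε)),
      t * (1+r) * (t^2 + r^2) ^ (-(5/4 : ℝ)) *
        Real.exp (-ρ * (Real.sqrt (t^2 + r^2) - r)))
      = ∫ r in Ioo (0:ℝ) a ∪ Ioi b, F r from rfl]
  rw [setIntegral_union hdisj measurableSet_Ioi hFioo hFIoi]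
  calc (∫ r in Ioo (0:ℝ) a, F r) + ∫ r in Ioi b, F r
      ≤ K * a + 4 * t * b ^ (-(1/2):ℝ) := add_le_add hIoo_le hIoi_le
    _ ≤ t ^ (-(ε/2):ℝ) + 4 * t ^ (-(ε/2):ℝ) := by
        rw [hIoi_val]; exact add_le_add hKa le_rfl
    _ = 5 * t ^ (-(ε/2):ℝ) := by ring
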